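/- arXiv:2409.12607 — 2 statements merged into one kernel-verified Lean document; each statement's English description precedes it below -/
import Mathlib

section
/- Let φ : [-α,α] → ℝ be a C² solution of φ'' + σφ' + g(φ)u'φ' + g(φ)φ(1-φ) = 0 with φ(-α)=1, φ(α)=0, where g : ℝ → [0,1] is continuous with g = 0 on (-∞,θ] and g ≥ 0, u ∈ C¹, σ ∈ ℝ. Then φ(ξ) ≤ 1 for all ξ ∈ [-α,α]. -/
theorem phi_le_one (α θ σ : ℝ) (hα : 0 < α) (hθ0 : 0 < θ) (hθ1 : θ < 1)
    (g : ℝ → ℝ) (hgc : Continuous g) (hg0 : ∀ s, 0 ≤ g s) (hg1 : ∀ s, g s ≤ 1)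
    (hgθ : ∀ s, s ≤ θ → g s = 0)
    (u u' : ℝ → ℝ) (hu : ∀ x ∈ Set.Icc (-α) α, HasDerivAt u (u' x) x)
    (hu'c : ContinuousOn u' (Set.Icc (-α) α))
    (φ φ' φ'' : ℝ → ℝ)
    (hφ1 : ∀ x ∈ Set.Icc (-α) α, HasDerivAt φ (φ' x) x)
    (hφ2 : ∀ x ∈ Set.Icc (-α) α, HasDerivAt φ' (φ'' x) x)
    (hφ''c : ContinuousOn φ'' (Set.Icc (-α) α))
    (hode : ∀ x ∈ Set.Icc (-α) α,
      φ'' x + σ * φ' x + g (φ x) * u' x * φ' x + g (φ x) * φ x * (1 - φ x) = 0)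
    (hbc1 : φ (-α) = 1) (hbc2 : φ α = 0) :
    ∀ x ∈ Set.Icc (-α) α, φ x ≤ 1 := by
  by_contra hcon
  push_neg at hcon
  obtain ⟨x0, hx0, hx0gt⟩ := hcon
  have hαα : (-α : ℝ) ≤ α := by linarith
  have hmemα : (-α : ℝ) ∈ Set.Icc (-α) α := ⟨le_refl _, hαα⟩
  have hφcont : ContinuousOn φ (Set.Icc (-α) α) := fun x hx =>
    (hφ1 x hx).continuousAt.continuousWithinAt
  have hφ'cont : ContinuousOn φ' (Set.Icc (-α) α) := fun x hx =>
    (hφ2 x hx).continuousAt.continuousWithinAt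
  -- the maximum point ξ
  obtain ⟨ξ, hξmem, hξmax⟩ :=
    isCompact_Icc.exists_isMaxOn (Set.nonempty_Icc.2 hαα) hφcont
  have hξgt : 1 < φ ξ := lt_of_lt_of_le hx0gt (hξmax hx0)
  have hξne1 : ξ ≠ -α := by intro h; rw [h, hbc1] at hξgt; linarith
  have hξne2 : ξ ≠ α := by intro h; rw [h, hbc2] at hξgt; linarith
  have hξIoo : ξ ∈ Set.Ioo (-α) α :=
    ⟨lt_of_le_of_ne hξmem.1 (Ne.symm hξne1), lt_of_le_of_ne hξmem.2 hξne2⟩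
  have hloc : IsLocalMax φ ξ := hξmax.isLocalMax (Icc_mem_nhds hξIoo.1 hξIoo.2)
  have hφ'ξ : φ' ξ = 0 := hloc.hasDerivAt_eq_zero (hφ1 ξ hξmem)
  -- continuous extension of the coefficient b(x) = σ + g(φ x) * u' x
  set p : ℝ → ℝ := fun x => (Set.projIcc (-α) α hαα x : ℝ) with hp
  have hpcont : Continuous p := continuous_subtype_val.comp (continuous_projIcc)
  have hpmem : ∀ x, p x ∈ Set.Icc (-α) α := fun x => (Set.projIcc (-α) α hαα x).2
  have hpeq : ∀ x ∈ Set.Icc (-α) α, p x = x := fun x hx => by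
    simp [hp, Set.projIcc_of_mem hαα hx]
  set B : ℝ → ℝ := fun x => σ + g (φ (p x)) * u' (p x) with hB
  have hBcont : Continuous B := by
    apply continuous_const.add
    exact ((hgc.comp (hφcont.comp_continuous hpcont hpmem)).mul
      (hu'c.comp_continuous hpcont hpmem))
  set F : ℝ → ℝ := fun x => ∫ t in (-α)..x, B t with hF
  have hFd : ∀ x : ℝ, HasDerivAt F (B x) x := fun x =>
    intervalIntegral.integral_hasDerivAt_right (hBcont.intervalIntegrable _ _)
      (hBcont.stronglyMeasurableAtFilter _ _) hBcont.continuousAt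
  -- the last point a ≤ ξ with φ a ≤ 1
  set S : Set ℝ := {x ∈ Set.Icc (-α) ξ | φ x ≤ 1} with hS
  have hSclosed : IsClosed S := by
    have : S = Set.Icc (-α) ξ ∩ φ ⁻¹' Set.Iic 1 := rfl
    rw [this]
    exact ContinuousOn.preimage_isClosed_of_isClosed
      (hφcont.mono (Set.Icc_subset_Icc le_rfl hξmem.2)) isClosed_Icc isClosed_Iic
  have hSne : S.Nonempty := ⟨-α, ⟨le_refl _, hξmem.1⟩, le_of_eq hbc1⟩
  have hSbdd : BddAbove S := ⟨ξ, fun x hx => hx.1.2⟩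
  set a : ℝ := sSup S with ha
  have haS : a ∈ S := hSclosed.csSup_mem hSne hSbdd
  have haξ : a ≤ ξ := haS.1.2
  have haIcc : a ∈ Set.Icc (-α) α := ⟨haS.1.1, le_trans haξ hξmem.2⟩
  have hsub : Set.Icc a ξ ⊆ Set.Icc (-α) α :=
    Set.Icc_subset_Icc haS.1.1 hξmem.2
  -- on (a, ξ] we have φ > 1
  have hgt1 : ∀ x, a < x → x ≤ ξ → 1 < φ x := by
    intro x hax hxξ
    by_contra hle
    push_neg at hle
    have hxS : x ∈ S := ⟨⟨le_trans haS.1.1 (le_of_lt hax), hxξ⟩, hle⟩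
    exact absurd (le_csSup hSbdd hxS) (not_le.2 hax)
  -- the auxiliary function h = φ' * exp ∘ F is monotone on [a, ξ]
  set h : ℝ → ℝ := fun x => φ' x * Real.exp (F x) with hh
  have hhd : ∀ x ∈ Set.Icc (-α) α,
      HasDerivAt h (φ'' x * Real.exp (F x) + φ' x * (Real.exp (F x) * B x)) x := by
    intro x hx
    exact (hφ2 x hx).mul ((hFd x).exp)
  have hhderiv_nonneg : ∀ x ∈ Set.Ioo a ξ, 0 ≤ deriv h x := by
    intro x hx
    have hxmem : x ∈ Set.Icc (-α) α := hsub ⟨le_of_lt hx.1, le_of_lt hx.2⟩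
    rw [(hhd x hxmem).deriv]
    have hBx : B x = σ + g (φ x) * u' x := by rw [hB]; simp only [hpeq x hxmem]
    have hode' := hode x hxmem
    have hφx : 1 < φ x := hgt1 x hx.1 (le_of_lt hx.2)
    have hgφ : 0 ≤ g (φ x) := hg0 _
    have hkey : 0 ≤ φ'' x + (σ + g (φ x) * u' x) * φ' x := by
      have : φ'' x + (σ + g (φ x) * u' x) * φ' x = -(g (φ x) * φ x * (1 - φ x)) := by
        linarith [hode']
      rw [this]
      have h1 : g (φ x) * φ x * (1 - φ x) ≤ 0 :=
        mul_nonpos_of_nonneg_of_nonpos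
          (mul_nonneg hgφ (by linarith)) (by linarith)
      linarith
    rw [hBx]
    have hE : 0 < Real.exp (F x) := Real.exp_pos _
    nlinarith [hkey, hE]
  have hhmono : MonotoneOn h (Set.Icc a ξ) := by
    apply monotoneOn_of_deriv_nonneg (convex_Icc a ξ)
    · intro x hx
      exact (hhd x (hsub hx)).continuousAt.continuousWithinAt
    · intro x hx
      rw [interior_Icc] at hx
      exact ((hhd x (hsub ⟨le_of_lt hx.1, le_of_lt hx.2⟩)).differentiableAt).differentiableWithinAt
    · intro x hx
      rw [interior_Icc] at hx
      exact hhderiv_nonneg x hx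
  have hhξ : h ξ = 0 := by rw [hh]; simp [hφ'ξ]
  -- φ' ≤ 0 on (a, ξ), hence φ is antitone on [a, ξ]
  have hφ'nonpos : ∀ x ∈ Set.Ioo a ξ, φ' x ≤ 0 := by
    intro x hx
    have hxIcc : x ∈ Set.Icc a ξ := ⟨le_of_lt hx.1, le_of_lt hx.2⟩
    have : h x ≤ h ξ := hhmono hxIcc (Set.right_mem_Icc.2 haξ) (le_of_lt hx.2)
    rw [hhξ] at this
    simp only [hh] at this
    have hE : 0 < Real.exp (F x) := Real.exp_pos _
    nlinarith [this, hE]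
  have hφanti : AntitoneOn φ (Set.Icc a ξ) := by
    apply antitoneOn_of_deriv_nonpos (convex_Icc a ξ)
    · exact hφcont.mono hsub
    · intro x hx
      rw [interior_Icc] at hx
      exact ((hφ1 x (hsub ⟨le_of_lt hx.1, le_of_lt hx.2⟩)).differentiableAt).differentiableWithinAt
    · intro x hx
      rw [interior_Icc] at hx
      rw [(hφ1 x (hsub ⟨le_of_lt hx.1, le_of_lt hx.2⟩)).deriv]
      exact hφ'nonpos x hx
  have : φ ξ ≤ φ a :=
    hφanti (Set.left_mem_Icc.2 haξ) (Set.right_mem_Icc.2 haξ) haξ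
  have : 1 < φ a := lt_of_lt_of_le hξgt this
  linarith [haS.2]
end

section
/- (Revisited LaSalle invariance) Let f : ℝ^N → ℝ^N be continuous, V : ℝ^N → ℝ be C¹, and x : [α,∞) → ℝ^N a bounded solution of x' = f(x). If V(x(t)) → L as t → ∞, then (d/dt)V(x(t)) → 0 as t → ∞. -/
theorem lasalle_revisited (N : ℕ) (α : ℝ)
    (f : (Fin N → ℝ) → (Fin N → ℝ)) (hf : Continuous f)
    (V : (Fin N → ℝ) → ℝ) (V' : (Fin N → ℝ) → ((Fin N → ℝ) →L[ℝ] ℝ))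
    (hV : ∀ p, HasFDerivAt V (V' p) p) (hV'c : Continuous V')
    (x : ℝ → (Fin N → ℝ))
    (hx : ∀ t, α ≤ t → HasDerivAt x (f (x t)) t)
    (hbdd : Bornology.IsBounded (x '' Set.Ici α))
    (L : ℝ)
    (hlim : Filter.Tendsto (fun t => V (x t)) Filter.atTop (nhds L)) :
    Filter.Tendsto (fun t => V' (x t) (f (x t))) Filter.atTop (nhds 0) := by
  set g : ℝ → ℝ := fun t => V' (x t) (f (x t)) with hgdef
  set h : ℝ → ℝ := fun t => V (x t) with hhdef
  have hderiv : ∀ t, α ≤ t → HasDerivAt h (g t) t := fun t ht =>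
    (hV (x t)).comp_hasDerivAt t (hx t ht)
  set K := closure (x '' Set.Ici α) with hKdef
  have hKc : IsCompact K :=
    Metric.isCompact_of_isClosed_isBounded isClosed_closure hbdd.closure
  have hmem : ∀ t, α ≤ t → x t ∈ K := fun t ht =>
    subset_closure ⟨t, ht, rfl⟩
  obtain ⟨M, hM⟩ := hKc.exists_bound_of_continuousOn hf.continuousOn
  have hM0 : 0 ≤ M := le_trans (norm_nonneg _) (hM _ (hmem α le_rfl))
  have hxlip : ∀ s ∈ Set.Ici α, ∀ u ∈ Set.Ici α, ‖x s - x u‖ ≤ M * ‖s - u‖ := by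
    intro s hs u hu
    exact (convex_Ici α).norm_image_sub_le_of_norm_hasDerivWithin_le
      (fun t ht => (hx t ht).hasDerivWithinAt)
      (fun t ht => hM _ (hmem t ht)) hu hs
  set G : (Fin N → ℝ) → ℝ := fun p => V' p (f p) with hGdef
  have hGc : Continuous G := hV'c.clm_apply hf
  by_contra hcon
  rw [Metric.tendsto_atTop] at hcon
  push_neg at hcon
  obtain ⟨ε, hε, hfreq⟩ := hcon
  obtain ⟨δ, hδ, hUC⟩ := Metric.uniformContinuousOn_iff.mp
    (hKc.uniformContinuousOn_of_continuous hGc.continuousOn) (ε / 2) (by linarith)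
  set δ' := δ / (M + 1) with hδ'def
  have hδ'0 : 0 < δ' := div_pos hδ (by linarith)
  have hMd : M * δ' < δ := by
    have h1 : δ' * (M + 1) = δ := by
      rw [hδ'def]; field_simp
    nlinarith
  obtain ⟨T, hT⟩ := (Metric.tendsto_atTop.mp hlim) (ε * δ' / 4) (by positivity)
  obtain ⟨t, ht, hgt⟩ := hfreq (max T α)
  have htT : T ≤ t := le_trans (le_max_left _ _) ht
  have htα : α ≤ t := le_trans (le_max_right _ _) ht
  have hcont : ContinuousOn h (Set.Icc t (t + δ')) := fun u hu =>
    ((hderiv u (le_trans htα hu.1)).continuousAt).continuousWithinAt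
  obtain ⟨c, hc, hceq⟩ := exists_hasDerivAt_eq_slope h g (by linarith) hcont
    (fun u hu => hderiv u (le_trans htα hu.1.le))
  have hcα : α ≤ c := le_trans htα hc.1.le
  -- |g c| < ε/2
  have hb : |h (t + δ') - h t| < ε * δ' / 2 := by
    have h1 := hT (t + δ') (by linarith)
    have h2 := hT t htT
    rw [Real.dist_eq] at h1 h2
    calc |h (t + δ') - h t| ≤ |h (t + δ') - L| + |L - h t| := abs_sub_le _ _ _
      _ = |h (t + δ') - L| + |h t - L| := by rw [abs_sub_comm L]
      _ < ε * δ' / 2 := by linarith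
  have hgc : |g c| < ε / 2 := by
    rw [hceq, add_sub_cancel_left, abs_div, abs_of_pos hδ'0, div_lt_iff₀ hδ'0]
    calc |h (t + δ') - h t| < ε * δ' / 2 := hb
      _ = ε / 2 * δ' := by ring
  -- |g c - g t| < ε/2
  have hdist : dist (x c) (x t) < δ := by
    rw [dist_eq_norm]
    calc ‖x c - x t‖ ≤ M * ‖c - t‖ := hxlip c hcα t htα
      _ ≤ M * δ' := by
          apply mul_le_mul_of_nonneg_left _ hM0
          rw [Real.norm_eq_abs, abs_of_pos (by linarith [hc.1] : (0:ℝ) < c - t)]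
          linarith [hc.2]
      _ < δ := hMd
  have hgct : dist (G (x c)) (G (x t)) < ε / 2 :=
    hUC (x c) (hmem c hcα) (x t) (hmem t htα) hdist
  have : dist (g t) 0 < ε := by
    rw [Real.dist_eq, sub_zero]
    have : g c = G (x c) := rfl
    have h3 : |g t| - |g c| ≤ |g t - g c| := abs_sub_abs_le_abs_sub _ _
    rw [Real.dist_eq] at hgct
    have h4 : |g t - g c| = |G (x c) - G (x t)| := by
      rw [abs_sub_comm]
    linarith [h3, h4 ▸ hgct]
  linarith [hgt]
end
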